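/- There exists a function F : ℝ → ℝ that is continuous and strictly increasing on the open interval (−∞, 2), satisfies Abel's equation F(2^(x/2)) = F(x) + 1 for every x < 2, and satisfies F(1) = 0. Consequently, for the tetration sequence defined by t₀ = 1 and t_{n+1} = 2^(t_n/2), one has F(t_n) = n for every natural number n. -/

import Mathlib

open Real Set Filter

noncomputable def ff (x : ℝ) : ℝ := (2:ℝ) ^ (x/2)
noncomputable def gg (x : ℝ) : ℝ := 2 * Real.logb 2 x
noncomputable def tt (n : ℕ) : ℝ := ff^[n] 1
noncomputable def NN (x : ℝ) : ℕ := sInf {n | gg^[n] x < 1}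
noncomputable def FF (x : ℝ) : ℝ :=
  if x < 0 then ff x - 2 else (NN x : ℝ) + gg^[NN x] x - 1

lemma ff_exp (x : ℝ) : ff x = Real.exp (Real.log 2 * (x/2)) := by
  rw [ff, Real.rpow_def_of_pos (by norm_num)]

lemma ff_cont : Continuous ff := by
  simp only [funext ff_exp]
  exact Real.continuous_exp.comp (continuous_const.mul (continuous_id.div_const 2))

lemma ff_pos (x : ℝ) : 0 < ff x := by rw [ff_exp]; exact Real.exp_pos _

lemma ff_sm : StrictMono ff := by
  intro x y h
  rw [ff_exp, ff_exp]
  exact Real.exp_lt_exp.2 (by nlinarith [Real.log_pos (by norm_num : (1:ℝ) < 2)])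

lemma ff_two : ff 2 = 2 := by
  rw [ff]; norm_num

lemma ff_zero : ff 0 = 1 := by rw [ff]; norm_num

lemma ff_one : ff 1 = Real.sqrt 2 := by
  rw [ff, Real.sqrt_eq_rpow]

lemma ff_lt_two {x : ℝ} (h : x < 2) : ff x < 2 := by
  have := ff_sm h; rwa [ff_two] at this

lemma gf (x : ℝ) : gg (ff x) = x := by
  rw [ff, gg, Real.logb_rpow (by norm_num) (by norm_num)]; ring

lemma fg {x : ℝ} (hx : 0 < x) : ff (gg x) = x := by
  rw [ff, gg]
  have : 2 * Real.logb 2 x / 2 = Real.logb 2 x := by ring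
  rw [this, Real.rpow_logb (by norm_num) (by norm_num) hx]

lemma gg_lt {x y : ℝ} (hx : 0 < x) (h : x < y) : gg x < gg y := by
  by_contra hc
  push_neg at hc
  rcases eq_or_lt_of_le hc with hc | hc
  · have := congrArg ff hc
    rw [fg (hx.trans h), fg hx] at this; linarith
  · have := ff_sm hc
    rw [fg (hx.trans h), fg hx] at this; linarith

lemma gg_one : gg 1 = 0 := by rw [gg]; simp

-- x < ff x for x < 2
lemma lt_ff {x : ℝ} (h : x < 2) : x < ff x := by
  have key : StrictAntiOn (fun x => ff x - x) (Iic 2) := by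
    apply strictAntiOn_of_deriv_neg (convex_Iic 2)
    · exact (ff_cont.continuousOn).sub continuousOn_id
    · intro x hx
      rw [interior_Iic, mem_Iio] at hx
      have hd : HasDerivAt (fun x => ff x - x) (Real.log 2 / 2 * ff x - 1) x := by
        have h1 : HasDerivAt (fun x : ℝ => Real.exp (Real.log 2 * (x/2)))
            (Real.exp (Real.log 2 * (x/2)) * (Real.log 2 / 2)) x := by
          have hlin : HasDerivAt (fun x : ℝ => Real.log 2 * (x/2)) (Real.log 2 / 2) x := by
            exact (((hasDerivAt_id x).div_const 2).const_mul (Real.log 2)).congr_deriv (by ring)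
          exact (Real.hasDerivAt_exp _).comp x hlin
        have h2 : (fun x => ff x - x) = fun x => Real.exp (Real.log 2 * (x/2)) - x := by
          funext y; rw [ff_exp]
        rw [h2]
        exact (h1.sub (hasDerivAt_id' x)).congr_deriv (by rw [ff_exp]; ring)
      rw [hd.deriv]
      have hlog : Real.log 2 < 1 := by
        have := Real.log_lt_sub_one_of_pos (by norm_num : (0:ℝ) < 2) (by norm_num)
        linarith
      have hl0 : 0 < Real.log 2 := Real.log_pos (by norm_num)
      have := ff_lt_two hx
      nlinarith
  have := key (mem_Iic.2 (le_of_lt h)) (mem_Iic.2 (le_refl 2)) h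
  simp only [ff_two] at this
  linarith

lemma tt_zero : tt 0 = 1 := rfl
lemma tt_succ (n : ℕ) : tt (n+1) = ff (tt n) := Function.iterate_succ_apply' ff n 1

lemma tt_lt_two (n : ℕ) : tt n < 2 := by
  induction n with
  | zero => norm_num [tt_zero]
  | succ n ih => rw [tt_succ]; exact ff_lt_two ih

lemma tt_lt_succ (n : ℕ) : tt n < tt (n+1) := by
  rw [tt_succ]; exact lt_ff (tt_lt_two n)

lemma tt_mono : StrictMono tt := strictMono_nat_of_lt_succ tt_lt_succ

lemma one_le_tt (n : ℕ) : 1 ≤ tt n := by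
  rcases Nat.eq_zero_or_pos n with h | h
  · simp [h, tt_zero]
  · exact le_of_lt (by simpa [tt_zero] using tt_mono h)

lemma gg_tt (n : ℕ) : gg (tt (n+1)) = tt n := by rw [tt_succ, gf]

lemma tt_tendsto : Filter.Tendsto tt Filter.atTop (nhds 2) := by
  have hmono : Monotone tt := tt_mono.monotone
  have hbdd : BddAbove (Set.range tt) := ⟨2, by rintro _ ⟨n, rfl⟩; exact le_of_lt (tt_lt_two n)⟩
  have hlim := tendsto_atTop_ciSup hmono hbdd
  set L := ⨆ n, tt n with hL
  have hL2 : L ≤ 2 := ciSup_le fun n => le_of_lt (tt_lt_two n)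
  have hfL : ff L = L := by
    have hc : Filter.Tendsto (fun n => ff (tt n)) Filter.atTop (nhds (ff L)) := by
      exact (ff_cont.continuousAt.tendsto).comp hlim
    have hc2 : Filter.Tendsto (fun n => ff (tt n)) Filter.atTop (nhds L) := by
      have : (fun n => ff (tt n)) = fun n => tt (n+1) := by funext n; rw [tt_succ]
      rw [this]
      exact hlim.comp (tendsto_add_atTop_nat 1)
    exact tendsto_nhds_unique hc hc2
  have : L = 2 := by
    rcases eq_or_lt_of_le hL2 with h | h
    · exact h
    · exact absurd hfL (ne_of_gt (lt_ff h))
  rwa [this] at hlim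

lemma exists_tt_gt {x : ℝ} (h : x < 2) : ∃ n, x < tt n := by
  have := tt_tendsto.eventually (eventually_gt_nhds h)
  exact this.exists

lemma gg_le {x y : ℝ} (hx : 0 < x) (h : x ≤ y) : gg x ≤ gg y := by
  rcases eq_or_lt_of_le h with h | h
  · rw [h]
  · exact le_of_lt (gg_lt hx h)

lemma low : ∀ n k : ℕ, k ≤ n → ∀ x, x ∈ Icc (tt n) (tt (n+1)) → 1 ≤ gg^[k] x := by
  intro n
  induction n with
  | zero =>
    intro k hk x hx
    interval_cases k
    simpa [tt_zero] using hx.1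
  | succ n ih =>
    intro k hk x hx
    have h1x : (1:ℝ) ≤ x := le_trans (one_le_tt (n+1)) hx.1
    have hgx : gg x ∈ Icc (tt n) (tt (n+1)) := by
      constructor
      · rw [← gg_tt n]; exact gg_le (by linarith [one_le_tt (n+1)]) hx.1
      · rw [← gg_tt (n+1)]; exact gg_le (by linarith) hx.2
    match k with
    | 0 => simpa using h1x
    | (j+1) =>
      rw [Function.iterate_succ_apply]
      exact ih j (Nat.succ_le_succ_iff.1 hk) _ hgx

lemma itersm (n : ℕ) : ∀ k : ℕ, k ≤ n+1 → ∀ x y : ℝ, x ∈ Icc (tt n) (tt (n+1)) →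
    y ∈ Icc (tt n) (tt (n+1)) → x < y → gg^[k] x < gg^[k] y := by
  intro k
  induction k with
  | zero => intro _ x y _ _ h; simpa using h
  | succ k ih =>
    intro hk x y hx hy hxy
    rw [Function.iterate_succ_apply', Function.iterate_succ_apply']
    have h1 : 1 ≤ gg^[k] x := low n k (Nat.succ_le_succ_iff.1 hk) x hx
    exact gg_lt (by linarith) (ih (le_of_lt hk) x y hx hy hxy)

lemma gg_iter_tt_one : ∀ n : ℕ, gg^[n] (tt n) = 1 := by
  intro n
  induction n with
  | zero => rfl
  | succ n ih => rw [Function.iterate_succ_apply, gg_tt, ih]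

lemma gg_iter_tt_zero : ∀ n : ℕ, gg^[n+1] (tt n) = 0 := by
  intro n
  induction n with
  | zero => simpa [tt_zero] using gg_one
  | succ n ih =>
    rw [Function.iterate_succ_apply, gg_tt]
    exact ih

lemma piece_bounds {n : ℕ} {x : ℝ} (hx : x ∈ Ico (tt n) (tt (n+1))) :
    0 ≤ gg^[n+1] x ∧ gg^[n+1] x < 1 := by
  constructor
  · rcases eq_or_lt_of_le hx.1 with h | h
    · rw [← h, gg_iter_tt_zero]
    · have := itersm n (n+1) le_rfl (tt n) x ⟨le_refl _, le_of_lt (tt_lt_succ n)⟩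
        ⟨le_of_lt h, le_of_lt hx.2⟩ h
      rw [gg_iter_tt_zero] at this
      linarith
  · have := itersm n (n+1) le_rfl x (tt (n+1)) ⟨hx.1, le_of_lt hx.2⟩
      ⟨le_of_lt (tt_lt_succ n), le_refl _⟩ hx.2
    rwa [gg_iter_tt_one (n+1)] at this

lemma NN_piece {n : ℕ} {x : ℝ} (hx : x ∈ Ico (tt n) (tt (n+1))) : NN x = n + 1 := by
  have hmem : (n+1) ∈ {m | gg^[m] x < 1} := (piece_bounds hx).2
  refine le_antisymm (Nat.sInf_le hmem) ?_
  by_contra hc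
  push_neg at hc
  have hne : {m | gg^[m] x < 1}.Nonempty := ⟨n+1, hmem⟩
  have h1 := Nat.sInf_mem hne
  have h2 : 1 ≤ gg^[sInf {m | gg^[m] x < 1}] x :=
    low n _ (Nat.lt_succ_iff.1 hc) x ⟨hx.1, le_of_lt hx.2⟩
  simp only [mem_setOf_eq] at h1
  rw [NN] at hc
  linarith

lemma FF_piece {n : ℕ} {x : ℝ} (hx : x ∈ Ico (tt n) (tt (n+1))) :
    FF x = n + gg^[n+1] x := by
  have h1 : ¬ x < 0 := by linarith [le_trans (one_le_tt n) hx.1]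
  rw [FF, if_neg h1, NN_piece hx]
  push_cast
  ring

lemma FF_base {x : ℝ} (hx : x ∈ Ico (0:ℝ) 1) : FF x = x - 1 := by
  have hN : NN x = 0 := Nat.sInf_eq_zero.2 (Or.inl (by simpa using hx.2))
  rw [FF, if_neg (not_lt.2 hx.1), hN]
  simp

lemma FF_neg {x : ℝ} (hx : x < 0) : FF x = ff x - 2 := by rw [FF, if_pos hx]

lemma FF_tt (n : ℕ) : FF (tt n) = n := by
  rw [FF_piece ⟨le_refl _, tt_lt_succ n⟩, gg_iter_tt_zero, add_zero]

lemma coverage {x : ℝ} (h1 : 1 ≤ x) (h2 : x < 2) : ∃ n, x ∈ Ico (tt n) (tt (n+1)) := by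
  obtain ⟨m, hm⟩ := exists_tt_gt h2
  have hne : {k | x < tt k}.Nonempty := ⟨m, hm⟩
  have hmem := Nat.sInf_mem hne
  have hs0 : sInf {k | x < tt k} ≠ 0 := by
    intro h0
    rw [h0] at hmem
    simp only [mem_setOf_eq, tt_zero] at hmem
    linarith
  obtain ⟨n, hn⟩ := Nat.exists_eq_succ_of_ne_zero hs0
  rw [hn] at hmem
  refine ⟨n, ?_, hmem⟩
  by_contra hc
  push_neg at hc
  have : n ∈ {k | x < tt k} := hc
  have := Nat.sInf_le this
  omega

lemma abel {x : ℝ} (hx : x < 2) : FF (ff x) = FF x + 1 := by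
  rcases lt_or_ge x 0 with h | h
  · have h1 : ff x < 1 := by have := ff_sm h; rwa [ff_zero] at this
    have h2 : 0 < ff x := ff_pos x
    rw [FF_base ⟨le_of_lt h2, h1⟩, FF_neg h]
    ring
  · rcases lt_or_ge x 1 with h1 | h1
    · have hfx : ff x ∈ Ico (tt 0) (tt 1) := by
        constructor
        · rw [tt_zero, ← ff_zero]; exact ff_sm.monotone h
        · rw [tt_succ, tt_zero]; exact ff_sm h1
      have hgf : gg^[1] (ff x) = x := by rw [Function.iterate_one, gf]
      rw [FF_piece hfx, FF_base ⟨h, h1⟩, hgf]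
      norm_num
    · obtain ⟨n, hn⟩ := coverage h1 hx
      have hfx : ff x ∈ Ico (tt (n+1)) (tt (n+2)) := by
        constructor
        · rw [tt_succ]; exact ff_sm.monotone hn.1
        · rw [show n+2 = (n+1)+1 from rfl, tt_succ (n+1)]
          exact ff_sm hn.2
      rw [FF_piece hfx, FF_piece hn]
      have : gg^[n+2] (ff x) = gg^[n+1] x := by
        rw [show n+2 = (n+1)+1 from rfl, Function.iterate_succ_apply, gf]
      rw [this]
      push_cast
      ring

lemma range_neg {x : ℝ} (hx : x < 0) : -2 < FF x ∧ FF x < -1 := by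
  rw [FF_neg hx]
  have h1 : ff x < 1 := by have := ff_sm hx; rwa [ff_zero] at this
  exact ⟨by linarith [ff_pos x], by linarith⟩

lemma range_base {x : ℝ} (hx : x ∈ Ico (0:ℝ) 1) : -1 ≤ FF x ∧ FF x < 0 := by
  rw [FF_base hx]
  exact ⟨by linarith [hx.1], by linarith [hx.2]⟩

lemma range_piece {n : ℕ} {x : ℝ} (hx : x ∈ Ico (tt n) (tt (n+1))) :
    (n:ℝ) ≤ FF x ∧ FF x < n + 1 := by
  rw [FF_piece hx]
  obtain ⟨h0, h1⟩ := piece_bounds hx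
  exact ⟨by linarith, by linarith⟩

lemma FF_mono : StrictMonoOn FF (Iio 2) := by
  intro x hx y hy hxy
  simp only [mem_Iio] at hx hy
  rcases lt_or_ge x 0 with h1 | h1
  · rcases lt_or_ge y 0 with h2 | h2
    · rw [FF_neg h1, FF_neg h2]
      have := ff_sm hxy; linarith
    · rcases lt_or_ge y 1 with h3 | h3
      · linarith [(range_neg h1).2, (range_base ⟨h2, h3⟩).1]
      · obtain ⟨n, hn⟩ := coverage h3 hy
        have := (range_piece hn).1
        have : (0:ℝ) ≤ (n:ℝ) := Nat.cast_nonneg n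
        linarith [(range_neg h1).2, (range_piece hn).1]
  · rcases lt_or_ge x 1 with h2 | h2
    · rcases lt_or_ge y 1 with h3 | h3
      · rw [FF_base ⟨h1, h2⟩, FF_base ⟨by linarith, h3⟩]
        linarith
      · obtain ⟨n, hn⟩ := coverage h3 hy
        have h4 : (0:ℝ) ≤ (n:ℝ) := Nat.cast_nonneg n
        linarith [(range_base ⟨h1, h2⟩).2, (range_piece hn).1]
    · obtain ⟨n, hn⟩ := coverage h2 hx
      obtain ⟨m, hm⟩ := coverage (by linarith) hy
      rcases lt_trichotomy n m with h | h | h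
      · have h4 : (n:ℝ) + 1 ≤ (m:ℝ) := by exact_mod_cast Nat.succ_le_of_lt h
        linarith [(range_piece hn).2, (range_piece hm).1]
      · subst h
        rw [FF_piece hn, FF_piece hm]
        have := itersm n (n+1) le_rfl x y ⟨hn.1, le_of_lt hn.2⟩ ⟨hm.1, le_of_lt hm.2⟩ hxy
        linarith
      · exfalso
        have : tt (m+1) ≤ tt n := tt_mono.monotone (Nat.succ_le_of_lt h)
        linarith [hm.2, hn.1]

lemma gg_contAt {y : ℝ} (hy : y ≠ 0) : ContinuousAt gg y := by
  have : ContinuousAt (fun x => 2 * Real.logb 2 x) y :=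
    continuousAt_const.mul (Real.continuousAt_logb hy)
  exact this

lemma cont_iter (n : ℕ) : ∀ k, k ≤ n + 1 → ContinuousOn (gg^[k]) (Icc (tt n) (tt (n+1))) := by
  intro k
  induction k with
  | zero => intro _; simpa using continuousOn_id
  | succ k ih =>
    intro hk
    rw [Function.iterate_succ']
    intro x hx
    have h1 : 1 ≤ gg^[k] x := low n k (Nat.succ_le_succ_iff.1 hk) x hx
    exact (gg_contAt (by linarith)).comp_continuousWithinAt (ih (le_of_lt hk) x hx)

lemma FF_eqOn_Icc (n : ℕ) : EqOn FF (fun x => (n:ℝ) + gg^[n+1] x) (Icc (tt n) (tt (n+1))) := by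
  intro x hx
  rcases lt_or_eq_of_le hx.2 with h | h
  · exact FF_piece ⟨hx.1, h⟩
  · subst h
    rw [FF_tt (n+1)]
    simp only
    rw [gg_iter_tt_one (n+1)]
    push_cast; ring

lemma FF_eqOn_Icc01 : EqOn FF (fun x => x - 1) (Icc (0:ℝ) 1) := by
  intro x hx
  rcases lt_or_eq_of_le hx.2 with h | h
  · exact FF_base ⟨hx.1, h⟩
  · subst h
    have : FF 1 = ((0:ℕ):ℝ) := FF_tt 0
    simpa using this

lemma FF_eqOn_Iic0 : EqOn FF (fun x => ff x - 2) (Iic (0:ℝ)) := by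
  intro x hx
  rcases lt_or_eq_of_le (mem_Iic.1 hx) with h | h
  · exact FF_neg h
  · subst h
    rw [FF_base ⟨le_refl _, by norm_num⟩]
    simp only [ff_zero]
    norm_num

lemma cwa_of_eqOn {G : ℝ → ℝ} {S s : Set ℝ} {x : ℝ} (hS : S ∈ nhdsWithin x s)
    (hG : ContinuousOn G S) (hxS : x ∈ S) (heq : EqOn FF G S) :
    ContinuousWithinAt FF s x := by
  have h2 : ContinuousWithinAt G s x := (hG x hxS).mono_of_mem_nhdsWithin hS
  exact h2.congr_of_eventuallyEq
    (Filter.eventually_of_mem hS (fun y hy => heq hy)) (heq hxS)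

lemma glue {x : ℝ} (hl : ContinuousWithinAt FF (Iic x) x)
    (hr : ContinuousWithinAt FF (Ici x) x) : ContinuousAt FF x := by
  rw [← continuousWithinAt_univ, ← Set.Iic_union_Ici (a := x)]
  exact (continuousWithinAt_union).2 ⟨hl, hr⟩

lemma FF_contAt {x : ℝ} (hx : x < 2) : ContinuousAt FF x := by
  rcases lt_or_ge x 0 with h | h
  · exact ((ff_cont.sub continuous_const).continuousAt).congr
      (Filter.eventuallyEq_of_mem (Iio_mem_nhds h) (fun y hy => FF_neg hy)).symm
  · rcases eq_or_lt_of_le h with h0 | h0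
    · -- x = 0
      subst h0
      refine glue ?_ ?_
      · exact cwa_of_eqOn self_mem_nhdsWithin
          ((ff_cont.sub continuous_const).continuousOn) (by simp) FF_eqOn_Iic0
      · exact cwa_of_eqOn (Icc_mem_nhdsGE_of_mem (by norm_num : (0:ℝ) ∈ Ico (0:ℝ) 1))
          ((continuous_id.sub continuous_const).continuousOn) (by norm_num) FF_eqOn_Icc01
    · rcases lt_or_ge x 1 with h1 | h1
      · -- x ∈ Ioo 0 1
        exact ((continuous_id.sub continuous_const).continuousAt).congr
          (Filter.eventuallyEq_of_mem (Ioo_mem_nhds h0 h1)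
            (fun y hy => FF_base ⟨le_of_lt hy.1, hy.2⟩)).symm
      · obtain ⟨n, hn⟩ := coverage h1 hx
        rcases eq_or_lt_of_le hn.1 with he | he
        · -- x = tt n
          have hxt : x = tt n := he.symm
          subst hxt
          refine glue ?_ ?_
          · -- left side
            match n with
            | 0 =>
              exact cwa_of_eqOn (Icc_mem_nhdsLE_of_mem
                  (by constructor <;> norm_num [tt_zero] : tt 0 ∈ Ioc (0:ℝ) 1))
                ((continuous_id.sub continuous_const).continuousOn)
                (by norm_num [tt_zero]) FF_eqOn_Icc01
            | (m+1) =>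
              refine cwa_of_eqOn (Icc_mem_nhdsLE_of_mem ⟨tt_lt_succ m, le_refl _⟩)
                ?_ ⟨le_of_lt (tt_lt_succ m), le_refl _⟩ (FF_eqOn_Icc m)
              exact continuousOn_const.add (cont_iter m (m+1) le_rfl)
          · refine cwa_of_eqOn (Icc_mem_nhdsGE_of_mem ⟨le_refl _, tt_lt_succ n⟩)
              ?_ ⟨le_refl _, le_of_lt (tt_lt_succ n)⟩ (FF_eqOn_Icc n)
            exact continuousOn_const.add (cont_iter n (n+1) le_rfl)
        · -- x ∈ Ioo (tt n) (tt (n+1))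
          have hG : ContinuousOn (fun y => (n:ℝ) + gg^[n+1] y) (Icc (tt n) (tt (n+1))) :=
            continuousOn_const.add (cont_iter n (n+1) le_rfl)
          have hca : ContinuousAt (fun y => (n:ℝ) + gg^[n+1] y) x :=
            hG.continuousAt (Icc_mem_nhds he hn.2)
          exact hca.congr (Filter.eventuallyEq_of_mem (Ioo_mem_nhds he hn.2)
            (fun y hy => FF_piece ⟨le_of_lt hy.1, hy.2⟩)).symm

lemma FF_contOn : ContinuousOn FF (Iio 2) :=
  fun x hx => (FF_contAt hx).continuousWithinAt

/-- There is a function `F`, continuous and strictly increasing on `(-∞, 2)`, satisfying Abel's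
equation `F(2^(x/2)) = F(x) + 1` for all `x < 2` and `F(1) = 0`; consequently, for the tetration
sequence `t₀ = 1`, `t_{n+1} = 2^(t_n/2)`, one has `F(t_n) = n` for all `n : ℕ`. -/
theorem abel_solution_on_Iio_two_with_intercept_one :
    ∃ F : ℝ → ℝ, ContinuousOn F (Set.Iio 2) ∧ StrictMonoOn F (Set.Iio 2) ∧
      (∀ x : ℝ, x < 2 → F ((2 : ℝ) ^ (x / 2)) = F x + 1) ∧ F 1 = 0 ∧
      ∀ n : ℕ, F ((fun t : ℝ => (2 : ℝ) ^ (t / 2))^[n] 1) = n := by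
  refine ⟨FF, FF_contOn, FF_mono, fun x hx => abel hx, ?_, fun n => ?_⟩
  · have : FF (tt 0) = ((0:ℕ):ℝ) := FF_tt 0
    simpa [tt_zero] using this
  · show FF (ff^[n] 1) = n
    exact FF_tt n
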